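/- Let X be a topological space and 0 → F → G → H → 0 a short exact sequence of sheaves of abelian groups on X. If F is flasque (for every open U ⊆ X the restriction map F(X) → F(U) is surjective), then the induced sequence of global sections 0 → F(X) → G(X) → H(X) → 0 is exact; in particular G(X) → H(X) is surjective. -/

import Mathlib

open CategoryTheory TopologicalSpace Opposite

namespace Stmt16Aux

variable {X : TopCat} {F G H : TopCat.Sheaf AddCommGrpCat X} (φ : F ⟶ G) (ψ : G ⟶ H)

lemma res_res (K : TopCat.Presheaf AddCommGrpCat X) {A B C : Opens X} (i : A ⟶ B) (j : B ⟶ C)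
    (s : K.obj (op C)) : K.map i.op (K.map j.op s) = K.map (i ≫ j).op s := by
  rw [← comp_apply, ← K.map_comp, ← op_comp]

lemma hom_congr (K : TopCat.Presheaf AddCommGrpCat X) {A B : Opens X} (i i' : A ⟶ B)
    (s : K.obj (op B)) : K.map i.op s = K.map i'.op s := by rw [Subsingleton.elim i i']

lemma nat_app {K L : TopCat.Sheaf AddCommGrpCat X} (η : K ⟶ L) {A B : Opens X} (i : A ⟶ B)
    (t : K.1.obj (op B)) :
    η.1.app (op A) (K.1.map i.op t) = L.1.map i.op (η.1.app (op B) t) := by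
  rw [← comp_apply, η.1.naturality, comp_apply]

lemma comp_zero_app
    (hmid : ∀ x : X,
      Set.range ((TopCat.Presheaf.stalkFunctor AddCommGrpCat x).map φ.1) =
        {a | ((TopCat.Presheaf.stalkFunctor AddCommGrpCat x).map ψ.1) a = 0})
    (U : Opens X) (t : F.1.obj (op U)) :
    ψ.1.app (op U) (φ.1.app (op U) t) = 0 := by
  apply TopCat.Presheaf.section_ext H U _ 0
  intro x hx
  rw [map_zero (ConcreteCategory.hom (H.presheaf.germ U x hx)), ← TopCat.Presheaf.stalkFunctor_map_germ_apply,
    ← TopCat.Presheaf.stalkFunctor_map_germ_apply]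
  exact (hmid x).le ⟨F.presheaf.germ U x hx t, rfl⟩

lemma mid_surj
    (hinj : ∀ x : X,
      Function.Injective ((TopCat.Presheaf.stalkFunctor AddCommGrpCat x).map φ.1))
    (hmid : ∀ x : X,
      Set.range ((TopCat.Presheaf.stalkFunctor AddCommGrpCat x).map φ.1) =
        {a | ((TopCat.Presheaf.stalkFunctor AddCommGrpCat x).map ψ.1) a = 0})
    (U : Opens X) (s : G.1.obj (op U)) (hs : ψ.1.app (op U) s = 0) :
    ∃ t, φ.1.app (op U) t = s := by
  have loc : ∀ x : U, ∃ (V : Opens X) (_ : x.1 ∈ V) (iVU : V ⟶ U) (t : F.1.obj (op V)),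
      φ.1.app (op V) t = G.1.map iVU.op s := by
    rintro ⟨x, hx⟩
    have h2 : G.presheaf.germ U x hx s ∈
        Set.range ((TopCat.Presheaf.stalkFunctor AddCommGrpCat x).map φ.1) := by
      rw [hmid x]
      show ((TopCat.Presheaf.stalkFunctor AddCommGrpCat x).map ψ.1) (G.presheaf.germ U x hx s) = 0
      rw [TopCat.Presheaf.stalkFunctor_map_germ_apply, hs]
      exact map_zero _
    obtain ⟨a, ha⟩ := h2
    obtain ⟨V₁, hxV₁, t₁, rfl⟩ := F.presheaf.germ_exist (x := x) a
    rw [TopCat.Presheaf.stalkFunctor_map_germ_apply] at ha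
    obtain ⟨V₂, hxV₂, iV₂V₁, iV₂U, heq⟩ := G.presheaf.germ_eq x hxV₁ hx _ _ ha
    refine ⟨V₂, hxV₂, iV₂U, F.1.map iV₂V₁.op t₁, ?_⟩
    rw [nat_app, heq]
  choose V mV iVU tf htf using loc
  have V_cover : U ≤ iSup V := by
    intro x hxU
    rw [Opens.mem_iSup]
    exact ⟨⟨x, hxU⟩, mV ⟨x, hxU⟩⟩
  have compat : TopCat.Presheaf.IsCompatible F.1 V tf := by
    intro i j
    apply TopCat.Presheaf.section_ext
    intro z hz
    apply hinj z
    rw [TopCat.Presheaf.stalkFunctor_map_germ_apply, TopCat.Presheaf.stalkFunctor_map_germ_apply,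
      nat_app, nat_app, htf, htf, res_res, res_res,
      Subsingleton.elim (Opens.infLELeft (V i) (V j) ≫ iVU i)
        (Opens.infLERight (V i) (V j) ≫ iVU j)]
  obtain ⟨t, t_spec, -⟩ := F.existsUnique_gluing' V U iVU V_cover tf compat
  refine ⟨t, ?_⟩
  apply G.eq_of_locally_eq' V U iVU V_cover
  intro i
  rw [← nat_app, t_spec, htf]

lemma compat_swap (K : TopCat.Presheaf AddCommGrpCat X) {A B : Opens ↑X}
    {s : K.obj (op A)} {s' : K.obj (op B)}
    (h : K.map (Opens.infLELeft A B).op s = K.map (Opens.infLERight A B).op s') :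
    K.map (Opens.infLELeft B A).op s' = K.map (Opens.infLERight B A).op s := by
  have h2 := congrArg (K.map (homOfLE (le_inf inf_le_right inf_le_left) : B ⊓ A ⟶ A ⊓ B).op) h
  rw [res_res, res_res] at h2
  rw [hom_congr K (Opens.infLELeft B A)
      (homOfLE (le_inf inf_le_right inf_le_left) ≫ Opens.infLERight A B) s',
    hom_congr K (Opens.infLERight B A)
      (homOfLE (le_inf inf_le_right inf_le_left) ≫ Opens.infLELeft A B) s]
  exact h2.symm

end Stmt16Aux

open Stmt16Aux

/-- If `0 → F → G → H → 0` is a short exact sequence of sheaves of abelian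
groups (exactness measured on stalks) and `F` is flasque, then the induced
sequence of global sections `0 → F(X) → G(X) → H(X) → 0` is exact. -/
theorem stmt_16 (X : TopCat) (F G H : TopCat.Sheaf AddCommGrpCat X)
    (φ : F ⟶ G) (ψ : G ⟶ H)
    (hinj : ∀ x : X,
      Function.Injective ((TopCat.Presheaf.stalkFunctor AddCommGrpCat x).map φ.1))
    (hmid : ∀ x : X,
      Set.range ((TopCat.Presheaf.stalkFunctor AddCommGrpCat x).map φ.1) =
        {a | ((TopCat.Presheaf.stalkFunctor AddCommGrpCat x).map ψ.1) a = 0})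
    (hsurj : ∀ x : X,
      Function.Surjective ((TopCat.Presheaf.stalkFunctor AddCommGrpCat x).map ψ.1))
    (hflasque : ∀ U : Opens X,
      Function.Surjective (F.1.map (homOfLE (le_top (a := U))).op)) :
    Function.Injective (φ.1.app (op ⊤)) ∧
    Set.range (φ.1.app (op ⊤)) = {a | (ψ.1.app (op ⊤)) a = 0} ∧
    Function.Surjective (ψ.1.app (op ⊤)) := by
  refine ⟨TopCat.Presheaf.app_injective_of_stalkFunctor_map_injective φ.1 ⊤
    (fun x _ => hinj x), ?_, ?_⟩
  · ext a
    constructor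
    · rintro ⟨u, rfl⟩
      exact comp_zero_app φ ψ hmid ⊤ u
    · intro ha
      exact mid_surj φ ψ hinj hmid ⊤ a ha
  · intro t
    let P := {p : Σ U : Opens ↑X, G.1.obj (op U) //
      ψ.1.app (op p.1) p.2 = H.1.map (homOfLE (le_top (a := p.1))).op t}
    let r : P → P → Prop := fun p q => ∃ i : p.1.1 ⟶ q.1.1, G.1.map i.op q.1.2 = p.1.2
    have rtrans : ∀ a b c : P, r a b → r b c → r a c := by
      rintro a b c ⟨i, hi⟩ ⟨j, hj⟩
      exact ⟨i ≫ j, by rw [← res_res, hj, hi]⟩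
    have hchains : ∀ c : Set P, IsChain r c → ∃ ub, ∀ a ∈ c, r a ub := by
      intro c hc
      let V : c → Opens ↑X := fun i => i.1.1.1
      let sf : ∀ i : c, G.1.obj (op (V i)) := fun i => i.1.1.2
      have key : ∀ p q : P, r p q → ∀ (W : Opens ↑X) (a : W ⟶ p.1.1) (b : W ⟶ q.1.1),
          G.1.map a.op p.1.2 = G.1.map b.op q.1.2 := by
        rintro p q ⟨i, hi⟩ W a b
        rw [← hi, res_res, Subsingleton.elim (a ≫ i) b]
      have compat : TopCat.Presheaf.IsCompatible G.1 V sf := by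
        intro i j
        rcases eq_or_ne i j with rfl | hne
        · exact hom_congr _ _ _ _
        · rcases hc i.2 j.2 (fun h => hne (Subtype.ext h)) with h | h
          · exact key _ _ h _ _ _
          · exact (key _ _ h _ _ _).symm
      obtain ⟨gl, gl_spec, -⟩ := G.existsUnique_gluing V sf compat
      have pred : ψ.1.app (op (iSup V)) gl = H.1.map (homOfLE (le_top (a := iSup V))).op t := by
        apply H.eq_of_locally_eq V
        intro i
        rw [← nat_app, gl_spec i, res_res]
        exact (i.1.2).trans (hom_congr _ _ _ _)
      exact ⟨⟨⟨iSup V, gl⟩, pred⟩, fun a ha => ⟨Opens.leSupr V ⟨a, ha⟩, gl_spec ⟨a, ha⟩⟩⟩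
    obtain ⟨⟨⟨U, g⟩, hg⟩, hmax⟩ :=
      exists_maximal_of_chains_bounded hchains (fun hab hbc => rtrans _ _ _ hab hbc)
    have hU : U = ⊤ := by
      by_contra hne
      have hxex : ∃ x, x ∉ U := by
        by_contra hall
        push_neg at hall
        exact hne (le_antisymm le_top fun y _ => hall y)
      obtain ⟨x, hx⟩ := hxex
      obtain ⟨a, ha⟩ := hsurj x (H.presheaf.germ ⊤ x (Opens.mem_top x) t)
      obtain ⟨V₁, hxV₁, g₁, rfl⟩ := G.presheaf.germ_exist (x := x) a
      rw [TopCat.Presheaf.stalkFunctor_map_germ_apply] at ha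
      obtain ⟨V₂, hxV₂, iV₂V₁, iV₂top, heq⟩ := H.presheaf.germ_eq x hxV₁ (Opens.mem_top x) _ _ ha
      obtain ⟨g', hg'def⟩ : ∃ g' : G.1.obj (op V₂), g' = G.1.map iV₂V₁.op g₁ := ⟨_, rfl⟩
      have hψg' : ψ.1.app (op V₂) g' = H.1.map (homOfLE (le_top (a := V₂))).op t := by
        rw [hg'def, nat_app, heq]
        exact hom_congr _ _ _ _
      obtain ⟨d, hddef⟩ : ∃ d : G.1.obj (op (U ⊓ V₂)),
        d = G.1.map (Opens.infLELeft U V₂).op g - G.1.map (Opens.infLERight U V₂).op g' :=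
        ⟨_, rfl⟩
      have hψd : ψ.1.app (op (U ⊓ V₂)) d = 0 := by
        rw [hddef, map_sub (ConcreteCategory.hom (ψ.1.app (op (U ⊓ V₂)))), nat_app, nat_app, hg, hψg',
          res_res, res_res,
          Subsingleton.elim (Opens.infLELeft U V₂ ≫ homOfLE le_top)
            (Opens.infLERight U V₂ ≫ homOfLE le_top),
          sub_self]
      obtain ⟨f, hf⟩ := mid_surj φ ψ hinj hmid (U ⊓ V₂) d hψd
      obtain ⟨ft, hft⟩ := hflasque (U ⊓ V₂) f
      obtain ⟨g'', hg''def⟩ : ∃ g'' : G.1.obj (op V₂),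
        g'' = g' + φ.1.app (op V₂) (F.1.map (homOfLE (le_top (a := V₂))).op ft) := ⟨_, rfl⟩
      have hψg'' : ψ.1.app (op V₂) g'' = H.1.map (homOfLE (le_top (a := V₂))).op t := by
        rw [hg''def, map_add (ConcreteCategory.hom (ψ.1.app (op V₂))), comp_zero_app φ ψ hmid, add_zero, hψg']
      have hagree : G.1.map (Opens.infLELeft U V₂).op g
          = G.1.map (Opens.infLERight U V₂).op g'' := by
        rw [hg''def, map_add (ConcreteCategory.hom (G.1.map (Opens.infLERight U V₂).op)), ← nat_app, res_res,
          hom_congr F.1 (Opens.infLERight U V₂ ≫ homOfLE le_top)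
            (homOfLE (le_top (a := U ⊓ V₂))) ft,
          hft, hf, hddef]
        abel
      let V' : ULift.{0} Bool → Opens ↑X := fun b => bif b.down then U else V₂
      let iV' : ∀ b, V' b ⟶ U ⊔ V₂ := fun b => match b with
        | ⟨true⟩ => homOfLE le_sup_left
        | ⟨false⟩ => homOfLE le_sup_right
      let sf' : ∀ b, G.1.obj (op (V' b)) := fun b => match b with
        | ⟨true⟩ => g
        | ⟨false⟩ => g''
      have hcover : U ⊔ V₂ ≤ iSup V' := sup_le (le_iSup V' ⟨true⟩) (le_iSup V' ⟨false⟩)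
      have compat' : TopCat.Presheaf.IsCompatible G.1 V' sf' := by
        rintro ⟨i⟩ ⟨j⟩
        cases i <;> cases j
        · exact hom_congr _ _ _ _
        · exact compat_swap G.1 hagree
        · exact hagree
        · exact hom_congr _ _ _ _
      obtain ⟨gl, gl_spec, -⟩ := G.existsUnique_gluing' V' (U ⊔ V₂) iV' hcover sf' compat'
      have predgl : ψ.1.app (op (U ⊔ V₂)) gl
          = H.1.map (homOfLE (le_top (a := U ⊔ V₂))).op t := by
        apply H.eq_of_locally_eq' V' (U ⊔ V₂) iV' hcover
        rintro ⟨b⟩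
        rw [← nat_app, gl_spec, res_res]
        cases b
        · exact hψg''.trans (hom_congr _ _ _ _)
        · exact hg.trans (hom_congr _ _ _ _)
      have hle := hmax ⟨⟨U ⊔ V₂, gl⟩, predgl⟩
        ⟨homOfLE le_sup_left, by
          show G.1.map (homOfLE (le_sup_left : U ≤ U ⊔ V₂)).op gl = g
          exact (hom_congr G.1 (homOfLE le_sup_left) (iV' ⟨true⟩) gl).trans (gl_spec ⟨true⟩)⟩
      obtain ⟨i, -⟩ := hle
      exact hx (i.le ((le_sup_right : V₂ ≤ U ⊔ V₂) hxV₂))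
    subst hU
    refine ⟨g, ?_⟩
    rw [hg, Subsingleton.elim (homOfLE (le_top (a := (⊤ : Opens ↑X)))) (𝟙 (⊤ : Opens ↑X)),
      op_id, H.1.map_id]
    rfl
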